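/- Let s > 0 and θ ∈ (0, π/2), and let D = {(r cos v, r sin v) : r ≥ 0, v ∈ [0, θ]} ⊆ ℝ². Define F : ℝ² → ℝ by F(w_x, w_y) = ∫_D (2πs)^{−1} exp(−((x − w_x)² + (y − w_y)²)/(2s)) dx dy. Then F is differentiable and, for every (w_x, w_y), ∂F/∂w_y (w_x, w_y) = [exp(−w_y²/(2s))/√(2πs)]·Φ(w_x/√s) − [exp(−(w_x tan θ − w_y)²/(2s(1 + tan²θ)))/√(2πs(1 + tan²θ))]·Φ((w_x + w_y tan θ)/√(s(1 + tan²θ))), where Φ is the standard normal distribution function. -/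

import Mathlib

open MeasureTheory Real

/-- The standard normal distribution function Φ. -/
noncomputable def stdNormalCDF (y : ℝ) : ℝ :=
  ∫ z in Set.Iic y, (Real.sqrt (2 * Real.pi))⁻¹ * Real.exp (-z ^ 2 / 2)

open Set

lemma gauss_halfline (σ μ : ℝ) (hσ : 0 < σ) :
    ∫ x in Set.Ioi (0:ℝ), Real.exp (-(x - μ) ^ 2 / (2 * σ))
      = Real.sqrt (2 * Real.pi * σ) * stdNormalCDF (μ / Real.sqrt σ) := by
  have hσ' : (0:ℝ) < Real.sqrt σ := Real.sqrt_pos.2 hσ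
  rw [← integral_Ici_eq_integral_Ioi]
  have himg : (fun z : ℝ => μ - Real.sqrt σ * z) '' Set.Iic (μ / Real.sqrt σ) = Set.Ici (0:ℝ) := by
    ext x
    constructor
    · rintro ⟨z, hz, rfl⟩
      rw [Set.mem_Iic, le_div_iff₀ hσ'] at hz
      simp only [Set.mem_Ici]
      nlinarith
    · intro hx
      simp only [Set.mem_Ici] at hx
      refine ⟨(μ - x) / Real.sqrt σ, ?_, ?_⟩
      · rw [Set.mem_Iic]
        exact (div_le_div_iff_of_pos_right hσ').mpr (by linarith)
      · field_simp; ring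
  rw [← himg, integral_image_eq_integral_abs_deriv_smul measurableSet_Iic
      (f' := fun _ => -Real.sqrt σ)
      (fun x _ => by
        simpa using (((hasDerivAt_id x).const_mul (Real.sqrt σ)).const_sub μ).hasDerivWithinAt)
      (fun a _ b _ h => by
        have h' : μ - Real.sqrt σ * a = μ - Real.sqrt σ * b := h
        have : Real.sqrt σ * a = Real.sqrt σ * b := by linarith
        exact mul_left_cancel₀ hσ'.ne' this)]
  have hpt : ∀ z : ℝ, |(-Real.sqrt σ)| • Real.exp (-(μ - Real.sqrt σ * z - μ) ^ 2 / (2 * σ))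
      = Real.sqrt σ * Real.exp (-z ^ 2 / 2) := by
    intro z
    rw [abs_neg, abs_of_pos hσ', smul_eq_mul]
    congr 1
    have h2 : (μ - Real.sqrt σ * z - μ) ^ 2 = σ * z ^ 2 := by
      rw [show μ - Real.sqrt σ * z - μ = -(Real.sqrt σ * z) by ring, neg_pow, mul_pow,
        Real.sq_sqrt hσ.le]
      ring
    rw [h2]
    field_simp
  simp_rw [hpt]
  rw [integral_const_mul]
  have hcdf : ∫ z in Set.Iic (μ / Real.sqrt σ), Real.exp (-z ^ 2 / 2)
      = Real.sqrt (2 * Real.pi) * stdNormalCDF (μ / Real.sqrt σ) := by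
    unfold stdNormalCDF
    rw [integral_const_mul, ← mul_assoc, mul_inv_cancel₀ (by positivity), one_mul]
  rw [hcdf, ← mul_assoc, ← Real.sqrt_mul (by positivity), mul_comm σ]

lemma cone_eq (θ : ℝ) (hθ1 : 0 < θ) (hθ2 : θ < Real.pi / 2) :
    {p : ℝ × ℝ | ∃ r ≥ (0 : ℝ), ∃ v ∈ Set.Icc (0 : ℝ) θ,
      p = (r * Real.cos v, r * Real.sin v)}
    = {p : ℝ × ℝ | p.2 ∈ Set.Icc 0 (p.1 * Real.tan θ)} := by
  have ht : 0 < Real.tan θ := Real.tan_pos_of_pos_of_lt_pi_div_two hθ1 hθ2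
  ext p
  simp only [Set.mem_setOf_eq, Set.mem_Icc]
  constructor
  · rintro ⟨r, hr, v, ⟨hv0, hvθ⟩, rfl⟩
    have hvlt : v < Real.pi / 2 := lt_of_le_of_lt hvθ hθ2
    have hcos : 0 < Real.cos v := Real.cos_pos_of_mem_Ioo ⟨by linarith [Real.pi_pos], hvlt⟩
    have hsin : 0 ≤ Real.sin v := Real.sin_nonneg_of_nonneg_of_le_pi hv0
      (by linarith [Real.pi_pos])
    constructor
    · exact mul_nonneg hr hsin
    · have htan : Real.tan v ≤ Real.tan θ := by
        rcases eq_or_lt_of_le hvθ with h | h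
        · rw [h]
        · exact le_of_lt (Real.tan_lt_tan_of_nonneg_of_lt_pi_div_two hv0 hθ2 h)
      have : Real.sin v ≤ Real.cos v * Real.tan θ := by
        rw [Real.tan_eq_sin_div_cos] at htan
        calc Real.sin v = (Real.sin v / Real.cos v) * Real.cos v := by field_simp
        _ ≤ Real.tan θ * Real.cos v := by
            exact mul_le_mul_of_nonneg_right htan hcos.le
        _ = Real.cos v * Real.tan θ := by ring
      calc r * Real.sin v ≤ r * (Real.cos v * Real.tan θ) :=
            mul_le_mul_of_nonneg_left this hr
      _ = r * Real.cos v * Real.tan θ := by ring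
  · rintro ⟨hy0, hyx⟩
    obtain ⟨x, y⟩ := p
    simp only at hy0 hyx ⊢
    rcases le_or_gt x 0 with hx | hx
    · have hxt : x * Real.tan θ ≤ 0 := mul_nonpos_of_nonpos_of_nonneg hx ht.le
      have hy : y = 0 := le_antisymm (hyx.trans hxt) hy0
      have hx0 : x = 0 := by nlinarith
      exact ⟨0, le_rfl, 0, ⟨le_rfl, hθ1.le⟩, by simp [hx0, hy]⟩
    · set u := y / x with hu
      have hu0 : 0 ≤ u := div_nonneg hy0 hx.le
      have hut : u ≤ Real.tan θ := by
        rw [hu, div_le_iff₀ hx]; nlinarith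
      refine ⟨Real.sqrt (x ^ 2 + y ^ 2), Real.sqrt_nonneg _, Real.arctan u, ⟨?_, ?_⟩, ?_⟩
      · exact by rw [← Real.arctan_zero]; exact Real.arctan_strictMono.monotone hu0
      · calc Real.arctan u ≤ Real.arctan (Real.tan θ) := Real.arctan_strictMono.monotone hut
        _ = θ := Real.arctan_tan (by linarith [Real.pi_pos]) hθ2
      · have hden : (0:ℝ) < Real.sqrt (1 + u ^ 2) := by positivity
        have hkey : Real.sqrt (1 + u ^ 2) * x = Real.sqrt (x ^ 2 + y ^ 2) := by
          rw [← Real.sqrt_sq hx.le, ← Real.sqrt_mul (by positivity)]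
          congr 1
          field_simp [hu]
          rw [Real.sq_sqrt (sq_nonneg x), hu, div_pow, add_mul, div_mul_cancel₀ _ (by positivity)]
          ring
        have hc : Real.cos (Real.arctan u) = 1 / Real.sqrt (1 + u ^ 2) := Real.cos_arctan u
        have hs : Real.sin (Real.arctan u) = u / Real.sqrt (1 + u ^ 2) := Real.sin_arctan u
        have h1 : Real.sqrt (x ^ 2 + y ^ 2) * Real.cos (Real.arctan u) = x := by
          rw [hc, ← hkey]; field_simp
        have h2 : Real.sqrt (x ^ 2 + y ^ 2) * Real.sin (Real.arctan u) = y := by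
          rw [hs, ← hkey]; field_simp [hu]
          rw [hu, div_mul_cancel₀ _ hx.ne']
        simp [h1, h2]

lemma integrable_g1 (c m : ℝ) (hc : 0 < c) :
    Integrable (fun x : ℝ => Real.exp (-(x - m) ^ 2 / c)) := by
  have h : Integrable (fun x : ℝ => Real.exp (-(1/c) * x ^ 2)) :=
    integrable_exp_neg_mul_sq (by positivity)
  have h2 := h.comp_sub_right m
  convert h2 using 2 with x
  ring_nf

lemma integrable_g2 (c m : ℝ) (hc : 0 < c) :
    Integrable (fun x : ℝ => |x - m| * Real.exp (-(x - m) ^ 2 / c)) := by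
  have h : Integrable (fun x : ℝ => x ^ (1:ℝ) * Real.exp (-(1/c) * x ^ 2)) :=
    integrable_rpow_mul_exp_neg_mul_sq (by positivity) (by norm_num)
  simp only [Real.rpow_one] at h
  have h' := (h.abs).comp_sub_right m
  convert h' using 2 with x
  rw [abs_mul, abs_of_pos (Real.exp_pos _)]
  ring_nf

lemma integrable_prod2 {f g : ℝ → ℝ} (hf : Integrable f) (hg : Integrable g) :
    Integrable (fun z : ℝ × ℝ => f z.1 * g z.2) := by
  exact hf.mul_prod hg

lemma key1 (s u a : ℝ) (hs : 0 < s) (h : |u - a| ≤ 1) :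
    (|u| + 1) * Real.exp (-u ^ 2 / (2 * s))
      ≤ Real.exp (s + 1 / (4 * s)) * Real.exp (-a ^ 2 / (8 * s)) := by
  have hua := abs_le.mp h
  have h1 : u ^ 2 ≥ a ^ 2 / 2 - 1 := by nlinarith [sq_nonneg (a - 2 * u)]
  have h2 : |u| * (4 * s) ≤ u ^ 2 + 4 * s ^ 2 := by
    nlinarith [sq_nonneg (|u| - 2 * s), sq_abs u]
  calc (|u| + 1) * Real.exp (-u ^ 2 / (2 * s))
      ≤ Real.exp (|u|) * Real.exp (-u ^ 2 / (2 * s)) := by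
        have := Real.add_one_le_exp (|u|)
        exact mul_le_mul_of_nonneg_right this (Real.exp_pos _).le
    _ = Real.exp (|u| - u ^ 2 / (2 * s)) := by rw [← Real.exp_add]; ring_nf
    _ ≤ Real.exp ((s + 1 / (4 * s)) + (-a ^ 2 / (8 * s))) := by
        apply Real.exp_le_exp.mpr
        have e1 : |u| ≤ (u ^ 2 + 4 * s ^ 2) / (4 * s) :=
          (le_div_iff₀ (by positivity)).mpr h2
        have e1' : (u ^ 2 + 4 * s ^ 2) / (4 * s) = u ^ 2 / (4 * s) + s := by
          field_simp
        have e2 : a ^ 2 / (8 * s) ≤ u ^ 2 / (4 * s) + 1 / (4 * s) := by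
          rw [div_add_div _ _ (by positivity) (by positivity),
            div_le_div_iff₀ (by positivity) (by positivity)]
          nlinarith [h1]
        have e3 : u ^ 2 / (2 * s) = u ^ 2 / (4 * s) + u ^ 2 / (4 * s) := by
          field_simp; ring
        have e4 : -a ^ 2 / (8 * s) = -(a ^ 2 / (8 * s)) := by ring
        linarith
    _ = _ := Real.exp_add _ _

lemma hasFDeriv_kernel (s : ℝ) (hs : 0 < s) (c : ℝ) (z w : ℝ × ℝ) :
    HasFDerivAt (fun w : ℝ × ℝ => c * Real.exp (-((z.1 - w.1) ^ 2 + (z.2 - w.2) ^ 2) / (2 * s)))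
      ((c * Real.exp (-((z.1 - w.1) ^ 2 + (z.2 - w.2) ^ 2) / (2 * s))) •
        (((z.1 - w.1) / s) • ContinuousLinearMap.fst ℝ ℝ ℝ
          + ((z.2 - w.2) / s) • ContinuousLinearMap.snd ℝ ℝ ℝ)) w := by
  have hf : HasFDerivAt (fun w : ℝ × ℝ => z.1 - w.1)
      (-(ContinuousLinearMap.fst ℝ ℝ ℝ)) w := by
    have := (hasFDerivAt_const z.1 w).sub (hasFDerivAt_fst (𝕜 := ℝ) (p := w) (E := ℝ) (F := ℝ))
    rw [zero_sub] at this
    exact this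
  have hg : HasFDerivAt (fun w : ℝ × ℝ => z.2 - w.2)
      (-(ContinuousLinearMap.snd ℝ ℝ ℝ)) w := by
    have := (hasFDerivAt_const z.2 w).sub (hasFDerivAt_snd (𝕜 := ℝ) (p := w) (E := ℝ) (F := ℝ))
    rw [zero_sub] at this
    exact this
  have hsq : ∀ (q : ℝ×ℝ → ℝ) (q' : (ℝ×ℝ) →L[ℝ] ℝ), HasFDerivAt q q' w →
      HasFDerivAt (fun w => q w ^ 2) ((2 * q w) • q') w := by
    intro q q' hq
    have := hq.mul hq
    have h2 : (q * q) = fun y => q y ^ 2 := by funext y; rw [Pi.mul_apply]; ring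
    rw [h2] at this
    refine this.congr_fderiv ?_
    rw [two_mul, add_smul]
  have h1 := (((hsq _ _ hf).add (hsq _ _ hg)).neg).const_mul ((2 * s)⁻¹)
  have hfun : (fun w : ℝ × ℝ => -((z.1 - w.1) ^ 2 + (z.2 - w.2) ^ 2) / (2 * s))
      = fun w : ℝ × ℝ => (2 * s)⁻¹ * (-((z.1 - w.1) ^ 2 + (z.2 - w.2) ^ 2)) := by
    funext w; ring
  have h1' : HasFDerivAt (fun w : ℝ × ℝ => -((z.1 - w.1) ^ 2 + (z.2 - w.2) ^ 2) / (2 * s))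
      (((z.1 - w.1) / s) • ContinuousLinearMap.fst ℝ ℝ ℝ
        + ((z.2 - w.2) / s) • ContinuousLinearMap.snd ℝ ℝ ℝ) w := by
    rw [hfun]
    refine h1.congr_fderiv ?_
    refine ContinuousLinearMap.ext fun v => ?_
    simp only [ContinuousLinearMap.add_apply, ContinuousLinearMap.smul_apply,
      ContinuousLinearMap.coe_fst', ContinuousLinearMap.coe_snd',
      ContinuousLinearMap.neg_apply, smul_eq_mul]
    field_simp
    ring
  have h2 := (h1'.exp).const_mul c
  refine h2.congr_fderiv ?_
  rw [smul_smul]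

lemma norm_combo_le (e α β : ℝ) :
    ‖e • (α • ContinuousLinearMap.fst ℝ ℝ ℝ + β • ContinuousLinearMap.snd ℝ ℝ ℝ)‖
      ≤ |e| * (|α| + |β|) := by
  apply ContinuousLinearMap.opNorm_le_bound _ (by positivity)
  intro v
  simp only [ContinuousLinearMap.smul_apply, ContinuousLinearMap.add_apply,
    ContinuousLinearMap.coe_fst', ContinuousLinearMap.coe_snd', smul_eq_mul]
  have h1 : |v.1| ≤ ‖v‖ := by simpa [Real.norm_eq_abs] using norm_fst_le v
  have h2 : |v.2| ≤ ‖v‖ := by simpa [Real.norm_eq_abs] using norm_snd_le v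
  rw [Real.norm_eq_abs]
  have e1 : |α| * |v.1| ≤ |α| * ‖v‖ := mul_le_mul_of_nonneg_left h1 (abs_nonneg α)
  have e2 : |β| * |v.2| ≤ |β| * ‖v‖ := mul_le_mul_of_nonneg_left h2 (abs_nonneg β)
  calc |e * (α * v.1 + β * v.2)| ≤ |e| * (|α| * |v.1| + |β| * |v.2|) := by
        rw [abs_mul]
        refine mul_le_mul_of_nonneg_left ?_ (abs_nonneg e)
        refine (abs_add_le _ _).trans ?_
        rw [abs_mul, abs_mul]
  _ ≤ |e| * (|α| * ‖v‖ + |β| * ‖v‖) :=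
        mul_le_mul_of_nonneg_left (add_le_add e1 e2) (abs_nonneg e)
  _ = |e| * (|α| + |β|) * ‖v‖ := by ring

lemma main_hasFDeriv (s : ℝ) (hs : 0 < s) (D : Set (ℝ × ℝ)) (w0 : ℝ × ℝ) :
    (Integrable (fun z : ℝ × ℝ =>
      ((2 * Real.pi * s)⁻¹ * Real.exp (-((z.1 - w0.1) ^ 2 + (z.2 - w0.2) ^ 2) / (2 * s))) •
        (((z.1 - w0.1) / s) • ContinuousLinearMap.fst ℝ ℝ ℝ
          + ((z.2 - w0.2) / s) • ContinuousLinearMap.snd ℝ ℝ ℝ)) (volume.restrict D)) ∧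
    HasFDerivAt (fun w : ℝ × ℝ =>
        ∫ z in D, (2 * Real.pi * s)⁻¹ * Real.exp (-((z.1 - w.1) ^ 2 + (z.2 - w.2) ^ 2) / (2 * s)))
      (∫ z in D,
        ((2 * Real.pi * s)⁻¹ * Real.exp (-((z.1 - w0.1) ^ 2 + (z.2 - w0.2) ^ 2) / (2 * s))) •
        (((z.1 - w0.1) / s) • ContinuousLinearMap.fst ℝ ℝ ℝ
          + ((z.2 - w0.2) / s) • ContinuousLinearMap.snd ℝ ℝ ℝ)) w0 := by
  have hπ : (0:ℝ) < 2 * Real.pi * s := by positivity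
  set c : ℝ := (2 * Real.pi * s)⁻¹ with hcdef
  have hcpos : 0 < c := by positivity
  have hsplit : ∀ u v : ℝ, Real.exp (-(u ^ 2 + v ^ 2) / (2 * s))
      = Real.exp (-u ^ 2 / (2 * s)) * Real.exp (-v ^ 2 / (2 * s)) := by
    intro u v; rw [← Real.exp_add]; ring_nf
  obtain ⟨bound, hbdef⟩ : ∃ b : ℝ × ℝ → ℝ, b = fun z : ℝ × ℝ =>
      (c / s * (Real.exp (s + 1 / (4 * s)) * Real.exp (s + 1 / (4 * s)))) *
      (Real.exp (-(z.1 - w0.1) ^ 2 / (8 * s)) * Real.exp (-(z.2 - w0.2) ^ 2 / (8 * s))) :=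
    ⟨_, rfl⟩
  have hFmeas : ∀ w : ℝ × ℝ, AEStronglyMeasurable
      (fun z : ℝ × ℝ => c * Real.exp (-((z.1 - w.1) ^ 2 + (z.2 - w.2) ^ 2) / (2 * s)))
      (volume.restrict D) := fun w => Continuous.aestronglyMeasurable (by fun_prop)
  have hFint : Integrable
      (fun z : ℝ × ℝ => c * Real.exp (-((z.1 - w0.1) ^ 2 + (z.2 - w0.2) ^ 2) / (2 * s)))
      (volume.restrict D) := by
    apply Integrable.restrict
    simp_rw [hsplit]
    have := (integrable_prod2 (integrable_g1 (2 * s) w0.1 (by positivity))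
      (integrable_g1 (2 * s) w0.2 (by positivity))).const_mul c
    simpa [mul_assoc] using this
  have hF'cont : Continuous (fun z : ℝ × ℝ =>
      (c * Real.exp (-((z.1 - w0.1) ^ 2 + (z.2 - w0.2) ^ 2) / (2 * s))) •
        (((z.1 - w0.1) / s) • ContinuousLinearMap.fst ℝ ℝ ℝ
          + ((z.2 - w0.2) / s) • ContinuousLinearMap.snd ℝ ℝ ℝ)) := by
    refine Continuous.smul (f := fun z : ℝ × ℝ => c * Real.exp (-((z.1 - w0.1) ^ 2 + (z.2 - w0.2) ^ 2) / (2 * s))) (g := fun z : ℝ × ℝ => ((z.1 - w0.1) / s) • ContinuousLinearMap.fst ℝ ℝ ℝ + ((z.2 - w0.2) / s) • ContinuousLinearMap.snd ℝ ℝ ℝ) ?_ ?_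
    · fun_prop
    · exact ((by fun_prop : Continuous fun z : ℝ × ℝ => (z.1 - w0.1) / s).smul
        continuous_const).add
        (((by fun_prop : Continuous fun z : ℝ × ℝ => (z.2 - w0.2) / s)).smul continuous_const)
  have key_bound : ∀ z : ℝ × ℝ, ∀ w ∈ Metric.ball w0 1,
      ‖(c * Real.exp (-((z.1 - w.1) ^ 2 + (z.2 - w.2) ^ 2) / (2 * s))) •
        (((z.1 - w.1) / s) • ContinuousLinearMap.fst ℝ ℝ ℝ
          + ((z.2 - w.2) / s) • ContinuousLinearMap.snd ℝ ℝ ℝ)‖ ≤ bound z := by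
    intro z w hw
    have hdist := Metric.mem_ball.mp hw
    rw [Prod.dist_eq] at hdist
    have hw1 : |w.1 - w0.1| ≤ 1 := by
      have := (max_lt_iff.mp hdist).1
      rw [Real.dist_eq] at this; exact this.le
    have hw2 : |w.2 - w0.2| ≤ 1 := by
      have := (max_lt_iff.mp hdist).2
      rw [Real.dist_eq] at this; exact this.le
    have hu : |(z.1 - w.1) - (z.1 - w0.1)| ≤ 1 := by
      rw [show (z.1 - w.1) - (z.1 - w0.1) = -(w.1 - w0.1) by ring, abs_neg]; exact hw1
    have hv : |(z.2 - w.2) - (z.2 - w0.2)| ≤ 1 := by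
      rw [show (z.2 - w.2) - (z.2 - w0.2) = -(w.2 - w0.2) by ring, abs_neg]; exact hw2
    have k1 := key1 s (z.1 - w.1) (z.1 - w0.1) hs hu
    have k2 := key1 s (z.2 - w.2) (z.2 - w0.2) hs hv
    calc ‖(c * Real.exp (-((z.1 - w.1) ^ 2 + (z.2 - w.2) ^ 2) / (2 * s))) •
        (((z.1 - w.1) / s) • ContinuousLinearMap.fst ℝ ℝ ℝ
          + ((z.2 - w.2) / s) • ContinuousLinearMap.snd ℝ ℝ ℝ)‖
        ≤ |c * Real.exp (-((z.1 - w.1) ^ 2 + (z.2 - w.2) ^ 2) / (2 * s))| *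
            (|(z.1 - w.1) / s| + |(z.2 - w.2) / s|) := norm_combo_le _ _ _
      _ = (c / s) * ((|z.1 - w.1| + |z.2 - w.2|) *
            (Real.exp (-(z.1 - w.1) ^ 2 / (2 * s)) * Real.exp (-(z.2 - w.2) ^ 2 / (2 * s)))) := by
          rw [abs_mul, abs_of_pos hcpos, abs_of_pos (Real.exp_pos _), hsplit,
            abs_div, abs_div, abs_of_pos hs]
          ring
      _ ≤ (c / s) * (((|z.1 - w.1| + 1) * Real.exp (-(z.1 - w.1) ^ 2 / (2 * s))) *
            ((|z.2 - w.2| + 1) * Real.exp (-(z.2 - w.2) ^ 2 / (2 * s)))) := by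
          refine mul_le_mul_of_nonneg_left ?_ (by positivity)
          have hineq : |z.1 - w.1| + |z.2 - w.2|
              ≤ (|z.1 - w.1| + 1) * (|z.2 - w.2| + 1) := by
            nlinarith [abs_nonneg (z.1 - w.1), abs_nonneg (z.2 - w.2),
              mul_nonneg (abs_nonneg (z.1 - w.1)) (abs_nonneg (z.2 - w.2))]
          calc (|z.1 - w.1| + |z.2 - w.2|) *
              (Real.exp (-(z.1 - w.1) ^ 2 / (2 * s)) * Real.exp (-(z.2 - w.2) ^ 2 / (2 * s)))
              ≤ ((|z.1 - w.1| + 1) * (|z.2 - w.2| + 1)) *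
              (Real.exp (-(z.1 - w.1) ^ 2 / (2 * s)) * Real.exp (-(z.2 - w.2) ^ 2 / (2 * s))) :=
                mul_le_mul_of_nonneg_right hineq (by positivity)
          _ = ((|z.1 - w.1| + 1) * Real.exp (-(z.1 - w.1) ^ 2 / (2 * s))) *
              ((|z.2 - w.2| + 1) * Real.exp (-(z.2 - w.2) ^ 2 / (2 * s))) := by ring
      _ ≤ (c / s) * ((Real.exp (s + 1 / (4 * s)) * Real.exp (-(z.1 - w0.1) ^ 2 / (8 * s))) *
            (Real.exp (s + 1 / (4 * s)) * Real.exp (-(z.2 - w0.2) ^ 2 / (8 * s)))) := by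
          refine mul_le_mul_of_nonneg_left (mul_le_mul k1 k2 (by positivity) (by positivity))
            (by positivity)
      _ = bound z := by rw [hbdef]; ring
  have hbound_int : Integrable bound (volume.restrict D) := by
    rw [hbdef]
    exact ((integrable_prod2 (integrable_g1 (8 * s) w0.1 (by positivity))
      (integrable_g1 (8 * s) w0.2 (by positivity))).const_mul _).restrict
  have h_lip : ∀ᵐ z ∂(volume.restrict D), LipschitzOnWith (Real.nnabs (bound z))
      (fun w : ℝ × ℝ => c * Real.exp (-((z.1 - w.1) ^ 2 + (z.2 - w.2) ^ 2) / (2 * s)))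
      (Metric.ball w0 1) := by
    refine Filter.Eventually.of_forall (fun z => ?_)
    refine (convex_ball w0 1).lipschitzOnWith_of_nnnorm_hasFDerivWithin_le
      (fun w _ => (hasFDeriv_kernel s hs c z w).hasFDerivWithinAt) (fun w hw => ?_)
    rw [← NNReal.coe_le_coe, coe_nnnorm, Real.coe_nnabs]
    exact (key_bound z w hw).trans (le_abs_self _)
  have h_diff : ∀ᵐ z ∂(volume.restrict D), HasFDerivAt
      (fun w : ℝ × ℝ => c * Real.exp (-((z.1 - w.1) ^ 2 + (z.2 - w.2) ^ 2) / (2 * s)))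
      ((c * Real.exp (-((z.1 - w0.1) ^ 2 + (z.2 - w0.2) ^ 2) / (2 * s))) •
        (((z.1 - w0.1) / s) • ContinuousLinearMap.fst ℝ ℝ ℝ
          + ((z.2 - w0.2) / s) • ContinuousLinearMap.snd ℝ ℝ ℝ)) w0 :=
    Filter.Eventually.of_forall fun z => hasFDeriv_kernel s hs c z w0
  exact hasFDerivAt_integral_of_dominated_loc_of_lip (Metric.ball_mem_nhds w0 one_pos)
    (Filter.Eventually.of_forall hFmeas) hFint hF'cont.aestronglyMeasurable h_lip
    hbound_int h_diff

lemma inner_integral (s wx wy : ℝ) (hs : 0 < s) (x a : ℝ) (ha : 0 ≤ a) :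
    ∫ y in Set.Icc 0 a,
      ((2 * Real.pi * s)⁻¹ * Real.exp (-((x - wx) ^ 2 + (y - wy) ^ 2) / (2 * s)))
        * ((y - wy) / s)
    = (2 * Real.pi * s)⁻¹ * (Real.exp (-((x - wx) ^ 2 + wy ^ 2) / (2 * s))
        - Real.exp (-((x - wx) ^ 2 + (a - wy) ^ 2) / (2 * s))) := by
  rw [MeasureTheory.integral_Icc_eq_integral_Ioc, ← intervalIntegral.integral_of_le ha]
  have hA : ∀ y ∈ Set.uIcc (0:ℝ) a, HasDerivAt
      (fun y => -(2 * Real.pi * s)⁻¹ * Real.exp (-((x - wx) ^ 2 + (y - wy) ^ 2) / (2 * s)))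
      (((2 * Real.pi * s)⁻¹ * Real.exp (-((x - wx) ^ 2 + (y - wy) ^ 2) / (2 * s)))
        * ((y - wy) / s)) y := by
    intro y _
    have h0 : HasDerivAt (fun y : ℝ => y - wy) 1 y := (hasDerivAt_id y).sub_const wy
    have h1 := h0.pow 2
    have h2 := ((h1.const_add ((x - wx) ^ 2)).neg).div_const (2 * s)
    have hq : HasDerivAt (fun y : ℝ => -((x - wx) ^ 2 + (y - wy) ^ 2) / (2 * s))
        (-((y - wy) / s)) y := by
      refine h2.congr_deriv ?_
      field_simp
      ring
    have h3 := (hq.exp).const_mul (-(2 * Real.pi * s)⁻¹)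
    refine h3.congr_deriv ?_
    ring
  rw [intervalIntegral.integral_eq_sub_of_hasDerivAt hA
    ((Continuous.intervalIntegrable (by fun_prop) _ _))]
  rw [show ((0:ℝ) - wy) = -wy by ring, neg_sq]
  ring

lemma term2_integral (s t wx wy : ℝ) (hs : 0 < s) (ht : 0 < t) :
    ∫ x in Set.Ioi (0:ℝ), Real.exp (-((x - wx) ^ 2 + (x * t - wy) ^ 2) / (2 * s))
    = Real.exp (-(wx * t - wy) ^ 2 / (2 * s * (1 + t ^ 2)))
        * Real.sqrt (2 * Real.pi * (s / (1 + t ^ 2)))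
        * stdNormalCDF ((wx + wy * t) / Real.sqrt (s * (1 + t ^ 2))) := by
  have hK : (0:ℝ) < 1 + t ^ 2 := by positivity
  have hσ : (0:ℝ) < s / (1 + t ^ 2) := by positivity
  have hexp : ∀ x : ℝ, Real.exp (-((x - wx) ^ 2 + (x * t - wy) ^ 2) / (2 * s))
      = Real.exp (-(wx * t - wy) ^ 2 / (2 * s * (1 + t ^ 2)))
        * Real.exp (-(x - (wx + t * wy) / (1 + t ^ 2)) ^ 2 / (2 * (s / (1 + t ^ 2)))) := by
    intro x
    rw [← Real.exp_add]
    congr 1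
    field_simp
    ring
  simp_rw [hexp]
  rw [integral_const_mul, gauss_halfline (s / (1 + t ^ 2)) ((wx + t * wy) / (1 + t ^ 2)) hσ]
  have harg : (wx + t * wy) / (1 + t ^ 2) / Real.sqrt (s / (1 + t ^ 2))
      = (wx + wy * t) / Real.sqrt (s * (1 + t ^ 2)) := by
    have hsq : Real.sqrt (s / (1 + t ^ 2)) = Real.sqrt (s * (1 + t ^ 2)) / (1 + t ^ 2) := by
      rw [show s / (1 + t ^ 2) = s * (1 + t ^ 2) / (1 + t ^ 2) ^ 2 by field_simp,
        Real.sqrt_div (by positivity), Real.sqrt_sq hK.le]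
    rw [hsq]
    have hne : Real.sqrt (s * (1 + t ^ 2)) ≠ 0 := by positivity
    field_simp
  rw [harg]
  ring

lemma inv_mul_sqrt (x : ℝ) (hx : 0 < x) : x⁻¹ * Real.sqrt x = (Real.sqrt x)⁻¹ := by
  have h := Real.mul_self_sqrt hx.le
  have hsx : Real.sqrt x ≠ 0 := by positivity
  field_simp
  exact Real.sq_sqrt hx.le

lemma integral_value (s t wx wy : ℝ) (hs : 0 < s) (ht : 0 < t) :
    ∫ z in {p : ℝ × ℝ | p.2 ∈ Set.Icc 0 (p.1 * t)},
      ((2 * Real.pi * s)⁻¹ * Real.exp (-((z.1 - wx) ^ 2 + (z.2 - wy) ^ 2) / (2 * s)))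
        * ((z.2 - wy) / s)
    = Real.exp (-wy ^ 2 / (2 * s)) / Real.sqrt (2 * Real.pi * s)
        * stdNormalCDF (wx / Real.sqrt s)
      - Real.exp (-(wx * t - wy) ^ 2 / (2 * s * (1 + t ^ 2)))
          / Real.sqrt (2 * Real.pi * s * (1 + t ^ 2))
          * stdNormalCDF ((wx + wy * t) / Real.sqrt (s * (1 + t ^ 2))) := by
  have hπ : (0:ℝ) < 2 * Real.pi * s := by positivity
  set c : ℝ := (2 * Real.pi * s)⁻¹ with hcdef
  have hcpos : 0 < c := by positivity
  set f : ℝ × ℝ → ℝ := fun z =>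
    (c * Real.exp (-((z.1 - wx) ^ 2 + (z.2 - wy) ^ 2) / (2 * s))) * ((z.2 - wy) / s)
    with hfdef
  have hfcont : Continuous f := by fun_prop
  set Dt : Set (ℝ × ℝ) := {p : ℝ × ℝ | p.2 ∈ Set.Icc 0 (p.1 * t)} with hDt
  have hDm : MeasurableSet Dt := by
    have : Dt = {p : ℝ × ℝ | 0 ≤ p.2} ∩ {p : ℝ × ℝ | p.2 ≤ p.1 * t} := by
      ext p; simp [hDt, Set.mem_Icc, and_comm]
    rw [this]
    exact (measurableSet_le measurable_const measurable_snd).inter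
      (measurableSet_le measurable_snd (measurable_fst.mul measurable_const))
  have hsplit : ∀ u v : ℝ, Real.exp (-(u ^ 2 + v ^ 2) / (2 * s))
      = Real.exp (-u ^ 2 / (2 * s)) * Real.exp (-v ^ 2 / (2 * s)) := by
    intro u v; rw [← Real.exp_add]; ring_nf
  -- integrability of the indicator on the plane
  have hmaj : Integrable (fun z : ℝ × ℝ =>
      (c * Real.exp (-(z.1 - wx) ^ 2 / (2 * s)))
        * (|z.2 - wy| / s * Real.exp (-(z.2 - wy) ^ 2 / (2 * s)))) := by
    refine integrable_prod2 (f := fun x => c * Real.exp (-(x - wx) ^ 2 / (2 * s)))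
      (g := fun y => |y - wy| / s * Real.exp (-(y - wy) ^ 2 / (2 * s))) ?_ ?_
    · exact (integrable_g1 (2 * s) wx (by positivity)).const_mul c
    · have := (integrable_g2 (2 * s) wy (by positivity)).const_mul s⁻¹
      simp_rw [← mul_assoc, inv_mul_eq_div] at this
      exact this
  have hint : Integrable (Dt.indicator f) := by
    refine Integrable.mono' hmaj (hfcont.aestronglyMeasurable.indicator hDm)
      (Filter.Eventually.of_forall fun z => ?_)
    refine (norm_indicator_le_norm_self f z).trans ?_
    rw [Real.norm_eq_abs, hfdef]
    have : |c * Real.exp (-((z.1 - wx) ^ 2 + (z.2 - wy) ^ 2) / (2 * s)) * ((z.2 - wy) / s)|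
        = (c * Real.exp (-(z.1 - wx) ^ 2 / (2 * s)))
          * (|z.2 - wy| / s * Real.exp (-(z.2 - wy) ^ 2 / (2 * s))) := by
      rw [abs_mul, abs_mul, abs_of_pos hcpos, abs_of_pos (Real.exp_pos _), abs_div,
        abs_of_pos hs, hsplit]
      ring
    rw [this]
  -- Fubini
  rw [← MeasureTheory.integral_indicator hDm]
  rw [show (volume : Measure (ℝ × ℝ)) = (volume : Measure ℝ).prod volume from rfl] at hint ⊢
  rw [MeasureTheory.integral_prod _ hint]
  -- inner integral as set integral over Icc
  have hsec : ∀ x : ℝ, (fun y => Dt.indicator f (x, y))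
      = (Set.Icc 0 (x * t)).indicator (fun y => f (x, y)) := by
    intro x
    funext y
    by_cases h : y ∈ Set.Icc 0 (x * t)
    · rw [Set.indicator_of_mem h, Set.indicator_of_mem (by exact h)]
    · rw [Set.indicator_of_notMem h, Set.indicator_of_notMem (by exact h)]
  simp_rw [hsec, MeasureTheory.integral_indicator measurableSet_Icc]
  -- kill x ≤ 0
  rw [← MeasureTheory.setIntegral_eq_integral_of_forall_compl_eq_zero
    (s := Set.Ioi (0:ℝ)) (fun x hx => ?_)]
  swap
  · simp only [Set.mem_Ioi, not_lt] at hx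
    rcases lt_or_eq_of_le hx with h | h
    · rw [Set.Icc_eq_empty (by nlinarith), Measure.restrict_empty, integral_zero_measure]
    · rw [h, zero_mul, Set.Icc_self]
      exact MeasureTheory.setIntegral_measure_zero _ Real.volume_singleton
  -- evaluate inner integral on Ioi 0
  rw [MeasureTheory.setIntegral_congr_fun measurableSet_Ioi
    (g := fun x => c * (Real.exp (-((x - wx) ^ 2 + wy ^ 2) / (2 * s))
      - Real.exp (-((x - wx) ^ 2 + (x * t - wy) ^ 2) / (2 * s))))
    (fun x hx => inner_integral s wx wy hs x (x * t)
      (mul_nonneg (le_of_lt hx) ht.le))]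
  have hK : (0:ℝ) < 1 + t ^ 2 := by positivity
  have hsplit1 : ∀ x : ℝ, Real.exp (-((x - wx) ^ 2 + wy ^ 2) / (2 * s))
      = Real.exp (-wy ^ 2 / (2 * s)) * Real.exp (-(x - wx) ^ 2 / (2 * s)) := by
    intro x; rw [← Real.exp_add]; ring_nf
  have hi1 : IntegrableOn (fun x : ℝ => Real.exp (-((x - wx) ^ 2 + wy ^ 2) / (2 * s)))
      (Set.Ioi 0) := by
    apply Integrable.integrableOn
    simp_rw [hsplit1]
    exact (integrable_g1 (2 * s) wx (by positivity)).const_mul _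
  have hi2 : IntegrableOn
      (fun x : ℝ => Real.exp (-((x - wx) ^ 2 + (x * t - wy) ^ 2) / (2 * s)))
      (Set.Ioi 0) := by
    refine Integrable.mono' ((integrable_g1 (2 * s) wx (by positivity)).integrableOn)
      (Continuous.aestronglyMeasurable (by fun_prop))
      (Filter.Eventually.of_forall fun x => ?_)
    rw [Real.norm_eq_abs, abs_of_pos (Real.exp_pos _)]
    apply Real.exp_le_exp.mpr
    rw [div_le_div_iff_of_pos_right (by positivity : (0:ℝ) < 2 * s)]
    nlinarith [sq_nonneg (x * t - wy)]
  simp_rw [mul_sub]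
  rw [MeasureTheory.integral_sub (hi1.const_mul c) (hi2.const_mul c),
    MeasureTheory.integral_const_mul, MeasureTheory.integral_const_mul]
  simp_rw [hsplit1]
  rw [MeasureTheory.integral_const_mul, gauss_halfline s wx hs, term2_integral s t wx wy hs ht]
  have hms : Real.sqrt (2 * Real.pi * s) * Real.sqrt (2 * Real.pi * s) = 2 * Real.pi * s :=
    Real.mul_self_sqrt hπ.le
  have h1 : c * Real.sqrt (2 * Real.pi * s) = (Real.sqrt (2 * Real.pi * s))⁻¹ :=
    inv_mul_sqrt (2 * Real.pi * s) hπ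
  have hsqK : Real.sqrt (2 * Real.pi * (s / (1 + t ^ 2)))
      = Real.sqrt (2 * Real.pi * s * (1 + t ^ 2)) / (1 + t ^ 2) := by
    rw [show 2 * Real.pi * (s / (1 + t ^ 2))
        = 2 * Real.pi * s * (1 + t ^ 2) / (1 + t ^ 2) ^ 2 by field_simp,
      Real.sqrt_div (by positivity), Real.sqrt_sq hK.le]
  have hmsK : Real.sqrt (2 * Real.pi * s * (1 + t ^ 2)) * Real.sqrt (2 * Real.pi * s * (1 + t ^ 2))
      = 2 * Real.pi * s * (1 + t ^ 2) := Real.mul_self_sqrt (by positivity)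
  have h2 : c * Real.sqrt (2 * Real.pi * (s / (1 + t ^ 2)))
      = (Real.sqrt (2 * Real.pi * s * (1 + t ^ 2)))⁻¹ := by
    rw [hsqK, hcdef]
    rw [← inv_mul_sqrt (2 * Real.pi * s * (1 + t ^ 2)) (by positivity)]
    have hne : (2 * Real.pi * s) ≠ 0 := hπ.ne'
    have hKne : (1 + t ^ 2) ≠ 0 := hK.ne'
    field_simp
  calc c * (Real.exp (-wy ^ 2 / (2 * s)) * (Real.sqrt (2 * Real.pi * s) * stdNormalCDF (wx / Real.sqrt s)))
        - c * (Real.exp (-(wx * t - wy) ^ 2 / (2 * s * (1 + t ^ 2)))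
          * Real.sqrt (2 * Real.pi * (s / (1 + t ^ 2)))
          * stdNormalCDF ((wx + wy * t) / Real.sqrt (s * (1 + t ^ 2))))
      = (c * Real.sqrt (2 * Real.pi * s)) * Real.exp (-wy ^ 2 / (2 * s)) * stdNormalCDF (wx / Real.sqrt s)
        - (c * Real.sqrt (2 * Real.pi * (s / (1 + t ^ 2)))) * Real.exp (-(wx * t - wy) ^ 2 / (2 * s * (1 + t ^ 2)))
          * stdNormalCDF ((wx + wy * t) / Real.sqrt (s * (1 + t ^ 2))) := by ring
    _ = _ := by
        rw [h1, h2]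
        ring


/-- Explicit formula for the partial derivative in w_y of the Gaussian
probability F(w) = P(w + √s·Z ∈ D) of a cone D of opening angle θ. -/
theorem cone_probability_partial_deriv_wy
    (s θ : ℝ) (hs : 0 < s) (hθ1 : 0 < θ) (hθ2 : θ < Real.pi / 2)
    (D : Set (ℝ × ℝ))
    (hD : D = {p : ℝ × ℝ | ∃ r ≥ (0 : ℝ), ∃ v ∈ Set.Icc (0 : ℝ) θ,
      p = (r * Real.cos v, r * Real.sin v)})
    (F : ℝ × ℝ → ℝ)
    (hF : ∀ wx wy, F (wx, wy) = ∫ z in D,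
      (2 * Real.pi * s)⁻¹ * Real.exp (-((z.1 - wx) ^ 2 + (z.2 - wy) ^ 2) / (2 * s))) :
    Differentiable ℝ F ∧
    ∀ wx wy, deriv (fun a => F (wx, a)) wy =
      Real.exp (-wy ^ 2 / (2 * s)) / Real.sqrt (2 * Real.pi * s)
          * stdNormalCDF (wx / Real.sqrt s)
        - Real.exp (-(wx * Real.tan θ - wy) ^ 2 / (2 * s * (1 + Real.tan θ ^ 2)))
            / Real.sqrt (2 * Real.pi * s * (1 + Real.tan θ ^ 2))
            * stdNormalCDF ((wx + wy * Real.tan θ)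
                / Real.sqrt (s * (1 + Real.tan θ ^ 2))) := by

  have ht : 0 < Real.tan θ := Real.tan_pos_of_pos_of_lt_pi_div_two hθ1 hθ2
  have hD2 : D = {p : ℝ × ℝ | p.2 ∈ Set.Icc 0 (p.1 * Real.tan θ)} :=
    hD.trans (cone_eq θ hθ1 hθ2)
  have hFeq : F = fun w : ℝ × ℝ => ∫ z in D,
      (2 * Real.pi * s)⁻¹ * Real.exp (-((z.1 - w.1) ^ 2 + (z.2 - w.2) ^ 2) / (2 * s)) := by
    funext w
    rw [← hF w.1 w.2]
  constructor
  · intro w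
    rw [hFeq]
    exact (main_hasFDeriv s hs D w).2.differentiableAt
  · intro wx wy
    have hmain := main_hasFDeriv s hs D (wx, wy)
    have hF' : HasFDerivAt F (∫ z in D,
        ((2 * Real.pi * s)⁻¹
            * Real.exp (-((z.1 - (wx, wy).1) ^ 2 + (z.2 - (wx, wy).2) ^ 2) / (2 * s))) •
          (((z.1 - (wx, wy).1) / s) • ContinuousLinearMap.fst ℝ ℝ ℝ
            + ((z.2 - (wx, wy).2) / s) • ContinuousLinearMap.snd ℝ ℝ ℝ)) (wx, wy) := by
      rw [hFeq]
      exact hmain.2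
    have hcurve : HasDerivAt (fun a : ℝ => ((wx, a) : ℝ × ℝ)) ((0:ℝ), (1:ℝ)) wy :=
      (hasDerivAt_const wy wx).prodMk (hasDerivAt_id wy)
    have hcomp : HasDerivAt (fun a => F (wx, a)) _ wy := hF'.comp_hasDerivAt wy hcurve
    rw [hcomp.deriv, ContinuousLinearMap.integral_apply hmain.1]
    simp only [ContinuousLinearMap.smul_apply, ContinuousLinearMap.add_apply,
      ContinuousLinearMap.smul_apply, ContinuousLinearMap.coe_fst',
      ContinuousLinearMap.coe_snd', smul_eq_mul, mul_zero, zero_add, mul_one]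
    rw [hD2]
    exact integral_value s (Real.tan θ) wx wy hs ht
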